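/- Let E be a right H-comodule algebra, U = E^{coH}, and γ : H → E a convolution-invertible H-comodule algebra map (trivializing section). Then the map ξ : U#H → E, ξ(u#h) = uγ(h), is an isomorphism of left U-modules and right H-comodule algebras, where the action on U used to form U#H is h▷u = Σ γ(h₍₁₎)uγ(Sh₍₂₎). -/

import Mathlib

open TensorProduct

/-- The subalgebra of coinvariants of a right `H`-comodule algebra. -/
def coinv {k H E : Type*} [Field k] [Ring H] [HopfAlgebra k H] [Ring E] [Algebra k E]
    (ρ : E →ₐ[k] E ⊗[k] H) : Subalgebra k E where
  carrier := {u : E | ρ u = u ⊗ₜ (1 : H)}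
  mul_mem' := by
    intro a b ha hb
    simp only [Set.mem_setOf_eq] at *
    rw [map_mul, ha, hb, Algebra.TensorProduct.tmul_mul_tmul, one_mul]
  add_mem' := by
    intro a b ha hb
    simp only [Set.mem_setOf_eq] at *
    rw [map_add, ha, hb, ← TensorProduct.add_tmul]
  algebraMap_mem' := by
    intro r
    simp only [Set.mem_setOf_eq, AlgHom.commutes, Algebra.TensorProduct.algebraMap_apply]

/-- The adjoint-type action `h ▷ u = Σ γ(h₍₁₎) u γ(S h₍₂₎)` as a linear map in `h`. -/
noncomputable def actL {k H E : Type*} [Field k] [Ring H] [HopfAlgebra k H] [Ring E]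
    [Algebra k E] (γ : H →ₐ[k] E) (u : E) : H →ₗ[k] E :=
  LinearMap.mul' k E ∘ₗ
    TensorProduct.map ((LinearMap.mulRight k u) ∘ₗ γ.toLinearMap)
      (γ.toLinearMap ∘ₗ HopfAlgebra.antipode (R := k)) ∘ₗ Coalgebra.comul

/-- The canonical right `H`-coaction on the smash product `U # H`. -/
noncomputable def smashCoact (k : Type*) (U H : Type*) [CommSemiring k] [AddCommMonoid U]
    [Module k U] [Semiring H] [Bialgebra k H] :
    (U ⊗[k] H) →ₗ[k] (U ⊗[k] H) ⊗[k] H :=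
  (TensorProduct.assoc k U H H).symm.toLinearMap ∘ₗ
    LinearMap.lTensor U (Coalgebra.comul (R := k))

/-- The map `ξ : U # H → E`, `ξ(u # h) = u γ(h)`. -/
noncomputable def xiMap {k H E : Type*} [Field k] [Ring H] [HopfAlgebra k H] [Ring E]
    [Algebra k E] (ρ : E →ₐ[k] E ⊗[k] H) (γ : H →ₐ[k] E) :
    ((coinv ρ) ⊗[k] H) →ₗ[k] E :=
  TensorProduct.lift
    (((LinearMap.mul k E) ∘ₗ (coinv ρ).val.toLinearMap).compl₂ γ.toLinearMap)


namespace Stmt6Aux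

/-- Trilinear "product" map `a ⊗ (b ⊗ c) ↦ f a * (g b * h c)`. -/
noncomputable def mulMap3 {k A B C M : Type*} [CommSemiring k]
    [AddCommMonoid A] [AddCommMonoid B] [AddCommMonoid C]
    [Module k A] [Module k B] [Module k C] [Semiring M] [Algebra k M]
    (f : A →ₗ[k] M) (g : B →ₗ[k] M) (h : C →ₗ[k] M) :
    A ⊗[k] (B ⊗[k] C) →ₗ[k] M :=
  LinearMap.mul' k M ∘ₗ TensorProduct.map f (LinearMap.mul' k M ∘ₗ TensorProduct.map g h)

@[simp] lemma mulMap3_tmul {k A B C M : Type*} [CommSemiring k]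
    [AddCommMonoid A] [AddCommMonoid B] [AddCommMonoid C]
    [Module k A] [Module k B] [Module k C] [Semiring M] [Algebra k M]
    (f : A →ₗ[k] M) (g : B →ₗ[k] M) (h : C →ₗ[k] M) (a : A) (b : B) (c : C) :
    mulMap3 f g h (a ⊗ₜ (b ⊗ₜ c)) = f a * (g b * h c) := by
  simp [mulMap3]

section Coalg

variable {k H : Type*} [CommSemiring k] [AddCommMonoid H] [Module k H] [Coalgebra k H]

lemma sum_counit_smul {a : H} (r : Coalgebra.Repr k a (H × H)) :
    ∑ i ∈ r.index, Coalgebra.counit (R := k) (r.left i) • r.right i = a := by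
  have h := congrArg (TensorProduct.lid k H) (Coalgebra.sum_counit_tmul_eq r)
  rw [map_sum] at h
  simp only [TensorProduct.lid_tmul, one_smul] at h
  exact h

lemma sum_smul_counit {a : H} (r : Coalgebra.Repr k a (H × H)) :
    ∑ i ∈ r.index, Coalgebra.counit (R := k) (r.right i) • r.left i = a := by
  have h := congrArg (TensorProduct.rid k H) (Coalgebra.sum_tmul_counit_eq r)
  rw [map_sum] at h
  simp only [TensorProduct.rid_tmul, one_smul] at h
  exact h

end Coalg

section Hopf

variable {k H : Type*} [CommSemiring k] [Semiring H] [HopfAlgebra k H]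

open Coalgebra HopfAlgebra

local notation "Δ" => Coalgebra.comul (R := k) (A := H)
local notation "ε" => Coalgebra.counit (R := k) (A := H)
local notation "𝒮" => HopfAlgebra.antipode (R := k) (A := H)

/-- inner collapse: `∑ (𝒮 c₁ ⊗ 𝒮 x) * Δ c₂ = 1 ⊗ (𝒮 x * c)`. -/
lemma inner_collapse (x : H) {c : H} (q : Coalgebra.Repr k c (H × H)) :
    ∑ j ∈ q.index, ((𝒮 (q.left j)) ⊗ₜ[k] (𝒮 x)) * Δ (q.right j)
      = (1 : H) ⊗ₜ[k] (𝒮 x * c) := by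
  classical
  set d : (j : H × H) → Coalgebra.Repr k (q.left j) (H × H) := fun j => Coalgebra.Repr.arbitrary k _
  set w : (j : H × H) → Coalgebra.Repr k (q.right j) (H × H) := fun j => Coalgebra.Repr.arbitrary k _
  have h3 := Coalgebra.sum_tmul_tmul_eq q d w
  have happ := congrArg (mulMap3
      ((((TensorProduct.mk k H H).flip) (𝒮 x)) ∘ₗ 𝒮)
      (((TensorProduct.mk k H H).flip) (1 : H))
      (TensorProduct.mk k H H (1 : H))) h3
  simp only [map_sum, mulMap3_tmul, LinearMap.comp_apply, LinearMap.flip_apply,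
    TensorProduct.mk_apply, Algebra.TensorProduct.tmul_mul_tmul, one_mul, mul_one] at happ
  -- happ : ∑ j ∑ t, (𝒮 (d.left t) * d.right t) ⊗ₜ (𝒮 x * q.right j)
  --      = ∑ j ∑ t, (𝒮 (q.left j) * w.left t) ⊗ₜ (𝒮 x * w.right t)
  have hL : ∀ j ∈ q.index,
      ∑ t ∈ (d j).index, ((𝒮 ((d j).left t) * (d j).right t) ⊗ₜ[k] (𝒮 x * q.right j))
        = (ε (q.left j)) • ((1 : H) ⊗ₜ[k] (𝒮 x * q.right j)) := by
    intro j _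
    rw [← TensorProduct.sum_tmul, HopfAlgebra.sum_antipode_mul_eq_smul (d j),
      TensorProduct.smul_tmul']
  have hR : ∀ j ∈ q.index,
      ∑ t ∈ (w j).index, ((𝒮 (q.left j) * (w j).left t) ⊗ₜ[k] (𝒮 x * (w j).right t))
        = ((𝒮 (q.left j)) ⊗ₜ[k] (𝒮 x)) * Δ (q.right j) := by
    intro j _
    rw [← (w j).eq, Finset.mul_sum]
    simp [Algebra.TensorProduct.tmul_mul_tmul]
  rw [Finset.sum_congr rfl hR] at happ
  rw [← happ, Finset.sum_congr rfl hL]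
  -- ∑ j, ε (q.left j) • (1 ⊗ₜ (𝒮 x * q.right j)) = 1 ⊗ₜ (𝒮 x * c)
  have := sum_counit_smul q
  calc ∑ j ∈ q.index, ε (q.left j) • ((1 : H) ⊗ₜ[k] (𝒮 x * q.right j))
      = ∑ j ∈ q.index, (1 : H) ⊗ₜ[k] (𝒮 x * (ε (q.left j) • q.right j)) := by
        simp [TensorProduct.tmul_smul, mul_smul_comm]
    _ = (1 : H) ⊗ₜ[k] (𝒮 x * ∑ j ∈ q.index, ε (q.left j) • q.right j) := by
        rw [← TensorProduct.tmul_sum, Finset.mul_sum]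
    _ = (1 : H) ⊗ₜ[k] (𝒮 x * c) := by rw [sum_counit_smul q]


/-- `Δ ∘ 𝒮` "with a twist": `h ↦ ∑ 𝒮 h₂ ⊗ 𝒮 h₁`. -/
noncomputable def Gmap : H →ₗ[k] H ⊗[k] H :=
  (TensorProduct.map 𝒮 𝒮) ∘ₗ (TensorProduct.comm k H H).toLinearMap ∘ₗ Δ

lemma Gmap_repr {a : H} (r : Coalgebra.Repr k a (H × H)) :
    Gmap a = ∑ i ∈ r.index, (𝒮 (r.right i)) ⊗ₜ[k] (𝒮 (r.left i)) := by
  rw [Gmap, LinearMap.comp_apply, LinearMap.comp_apply, LinearEquiv.coe_coe]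
  rw [show Δ a = ∑ i ∈ r.index, (r.left i) ⊗ₜ[k] (r.right i) from r.eq.symm]
  simp [map_sum]

lemma conv1 {a : H} (r : Coalgebra.Repr k a (H × H)) :
    ∑ i ∈ r.index, Δ (r.left i) * Δ (𝒮 (r.right i)) = ε a • ((1:H) ⊗ₜ[k] (1:H)) := by
  have : ∑ i ∈ r.index, Δ (r.left i) * Δ (𝒮 (r.right i))
      = Δ (∑ i ∈ r.index, r.left i * 𝒮 (r.right i)) := by
    rw [map_sum]
    exact Finset.sum_congr rfl fun i _ => (Bialgebra.comul_mul _ _).symm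
  rw [this, HopfAlgebra.sum_mul_antipode_eq_smul r, map_smul, Bialgebra.comul_one]
  rfl

lemma conv2 {a : H} (r : Coalgebra.Repr k a (H × H)) :
    ∑ i ∈ r.index, Gmap (r.left i) * Δ (r.right i) = ε a • ((1:H) ⊗ₜ[k] (1:H)) := by
  classical
  set p : (i : H × H) → Coalgebra.Repr k (r.left i) (H × H) := fun i => Coalgebra.Repr.arbitrary k _
  set q : (i : H × H) → Coalgebra.Repr k (r.right i) (H × H) := fun i => Coalgebra.Repr.arbitrary k _
  have h3 := Coalgebra.sum_tmul_tmul_eq r p q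
  have happ := congrArg (mulMap3
      ((TensorProduct.mk k H H (1 : H)) ∘ₗ 𝒮)
      ((((TensorProduct.mk k H H).flip) (1 : H)) ∘ₗ 𝒮)
      Δ) h3
  simp only [map_sum, mulMap3_tmul, LinearMap.comp_apply, LinearMap.flip_apply,
    TensorProduct.mk_apply, ← mul_assoc, Algebra.TensorProduct.tmul_mul_tmul,
    one_mul, mul_one] at happ
  -- LHS of happ: ∑ i ∑ j, (𝒮 (p.right j) ⊗ₜ 𝒮 (p.left j)) * Δ (r.right i)
  -- RHS of happ: ∑ i ∑ j, (𝒮 (q.left j) ⊗ₜ 𝒮 (r.left i)) * Δ (q.right j)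
  have hG : ∀ i ∈ r.index, Gmap (r.left i) * Δ (r.right i)
      = ∑ j ∈ (p i).index, ((𝒮 ((p i).right j)) ⊗ₜ[k] (𝒮 ((p i).left j))) * Δ (r.right i) := by
    intro i _
    rw [Gmap_repr (p i), Finset.sum_mul]
  rw [Finset.sum_congr rfl hG, happ]
  have hIC : ∀ i ∈ r.index,
      ∑ j ∈ (q i).index, ((𝒮 ((q i).left j)) ⊗ₜ[k] (𝒮 (r.left i))) * Δ ((q i).right j)
        = (1 : H) ⊗ₜ[k] (𝒮 (r.left i) * r.right i) := fun i _ => inner_collapse _ (q i)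
  rw [Finset.sum_congr rfl hIC, ← TensorProduct.tmul_sum,
    HopfAlgebra.sum_antipode_mul_eq_smul r]
  rw [TensorProduct.tmul_smul]

/-- The antipode is an anti-coalgebra morphism: `Δ (𝒮 h) = ∑ 𝒮 h₂ ⊗ 𝒮 h₁`. -/
lemma antipode_comul (h : H) : Δ (𝒮 h) = Gmap h := by
  classical
  set r : Coalgebra.Repr k h (H × H) := Coalgebra.Repr.arbitrary k h
  set p : (i : H × H) → Coalgebra.Repr k (r.left i) (H × H) := fun i => Coalgebra.Repr.arbitrary k _
  set q : (i : H × H) → Coalgebra.Repr k (r.right i) (H × H) := fun i => Coalgebra.Repr.arbitrary k _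
  have h3 := Coalgebra.sum_tmul_tmul_eq r p q
  have happ := congrArg (mulMap3 Gmap Δ (Δ ∘ₗ 𝒮)) h3
  simp only [map_sum, mulMap3_tmul, LinearMap.comp_apply] at happ
  have hL : ∑ i ∈ r.index, ∑ j ∈ (p i).index,
      Gmap ((p i).left j) * (Δ ((p i).right j) * Δ (𝒮 (r.right i))) = Δ (𝒮 h) := by
    calc ∑ i ∈ r.index, ∑ j ∈ (p i).index,
        Gmap ((p i).left j) * (Δ ((p i).right j) * Δ (𝒮 (r.right i)))
        = ∑ i ∈ r.index, (∑ j ∈ (p i).index,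
            Gmap ((p i).left j) * Δ ((p i).right j)) * Δ (𝒮 (r.right i)) := by
          refine Finset.sum_congr rfl fun i _ => ?_
          rw [Finset.sum_mul]
          exact Finset.sum_congr rfl fun j _ => (mul_assoc _ _ _).symm
      _ = ∑ i ∈ r.index, (ε (r.left i) • ((1:H) ⊗ₜ[k] (1:H))) * Δ (𝒮 (r.right i)) := by
          refine Finset.sum_congr rfl fun i _ => ?_
          rw [conv2 (p i)]
      _ = ∑ i ∈ r.index, ε (r.left i) • Δ (𝒮 (r.right i)) := by
          refine Finset.sum_congr rfl fun i _ => ?_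
          rw [smul_mul_assoc, Algebra.TensorProduct.one_def.symm, one_mul]
      _ = Δ (𝒮 (∑ i ∈ r.index, ε (r.left i) • r.right i)) := by
          rw [map_sum, map_sum]
          exact Finset.sum_congr rfl fun i _ => by rw [map_smul, map_smul]
      _ = Δ (𝒮 h) := by rw [sum_counit_smul r]
  have hR : ∑ i ∈ r.index, ∑ j ∈ (q i).index,
      Gmap (r.left i) * (Δ ((q i).left j) * Δ (𝒮 ((q i).right j))) = Gmap h := by
    calc ∑ i ∈ r.index, ∑ j ∈ (q i).index,
        Gmap (r.left i) * (Δ ((q i).left j) * Δ (𝒮 ((q i).right j)))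
        = ∑ i ∈ r.index, Gmap (r.left i) * (ε (r.right i) • ((1:H) ⊗ₜ[k] (1:H))) := by
          refine Finset.sum_congr rfl fun i _ => ?_
          rw [← Finset.mul_sum, conv1 (q i)]
      _ = ∑ i ∈ r.index, ε (r.right i) • Gmap (r.left i) := by
          refine Finset.sum_congr rfl fun i _ => ?_
          rw [mul_smul_comm, Algebra.TensorProduct.one_def.symm, mul_one]
      _ = Gmap h := by
          have heq : ∑ i ∈ r.index, ε (r.right i) • Gmap (k := k) (r.left i)
              = Gmap (k := k) (∑ i ∈ r.index, ε (r.right i) • r.left i) := by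
            rw [map_sum]
            exact Finset.sum_congr rfl fun i _ => (map_smul (Gmap (k := k) (H := H)) (ε (r.right i)) (r.left i)).symm
          rw [heq, sum_smul_counit r]
  rw [← hL, happ, hR]

end Hopf

section MainAux

variable {k H E : Type*} [Field k] [Ring H] [HopfAlgebra k H] [Ring E] [Algebra k E]

open Coalgebra HopfAlgebra

local notation "Δ" => Coalgebra.comul (R := k) (A := H)
local notation "ε" => Coalgebra.counit (R := k) (A := H)
local notation "𝒮" => HopfAlgebra.antipode (R := k) (A := H)

lemma mem_coinv {ρ : E →ₐ[k] E ⊗[k] H} {x : E} (hx : x ∈ coinv ρ) :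
    ρ x = x ⊗ₜ[k] (1 : H) := hx

/-- `β : E ⊗ H → E`, `e ⊗ h ↦ e * γ(𝒮 h)`. -/
noncomputable def betaMap (γ : H →ₐ[k] E) : E ⊗[k] H →ₗ[k] E :=
  LinearMap.mul' k E ∘ₗ TensorProduct.map LinearMap.id (γ.toLinearMap ∘ₗ 𝒮)

@[simp] lemma betaMap_tmul (γ : H →ₐ[k] E) (e : E) (h : H) :
    betaMap γ (e ⊗ₜ h) = e * γ (𝒮 h) := by
  simp [betaMap]

/-- `W : H ⊗ H → E ⊗ H`, `a ⊗ b ↦ γ(𝒮 b) ⊗ 𝒮 a`. -/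
noncomputable def Wmap (γ : H →ₐ[k] E) : H ⊗[k] H →ₗ[k] E ⊗[k] H :=
  TensorProduct.map (γ.toLinearMap ∘ₗ 𝒮) 𝒮 ∘ₗ (TensorProduct.comm k H H).toLinearMap

@[simp] lemma Wmap_tmul (γ : H →ₐ[k] E) (a b : H) :
    Wmap γ (a ⊗ₜ b) = γ (𝒮 b) ⊗ₜ[k] 𝒮 a := by
  simp [Wmap]

noncomputable def deltaMap (ρ : E →ₐ[k] E ⊗[k] H) (γ : H →ₐ[k] E) : E →ₗ[k] E :=
  betaMap γ ∘ₗ ρ.toLinearMap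

lemma rho_gammaS (ρ : E →ₐ[k] E ⊗[k] H) (γ : H →ₐ[k] E)
    (hγ : ∀ h : H, ρ (γ h) =
      TensorProduct.map γ.toLinearMap LinearMap.id (Coalgebra.comul (R := k) h)) (h : H) :
    ρ (γ (𝒮 h)) = Wmap γ (Δ h) := by
  rw [hγ (𝒮 h), antipode_comul h, Gmap, Wmap]
  simp only [LinearMap.comp_apply, LinearEquiv.coe_coe]
  generalize (TensorProduct.comm k H H) (Δ h) = t
  induction t using TensorProduct.induction_on with
  | zero => simp
  | tmul a b => simp
  | add a b ha hb => simp [map_add, ha, hb]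

/-- `V : E ⊗ H → E ⊗ H` built from `Δ` and `W`. -/
noncomputable def Vmap (γ : H →ₐ[k] E) : E ⊗[k] H →ₗ[k] E ⊗[k] H :=
  LinearMap.mul' k (E ⊗[k] H) ∘ₗ
    LinearMap.lTensor (E ⊗[k] H) (Wmap γ ∘ₗ Δ) ∘ₗ
    (TensorProduct.assoc k E H H).symm.toLinearMap ∘ₗ
    LinearMap.lTensor E Δ

set_option synthInstance.maxHeartbeats 1000000 in
lemma Vmap_tmul (γ : H →ₐ[k] E) (e : E) (h : H) :
    Vmap γ (e ⊗ₜ h) = (e * γ (𝒮 h)) ⊗ₜ[k] (1 : H) := by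
  classical
  set r : Coalgebra.Repr k h (H × H) := Coalgebra.Repr.arbitrary k h
  set d : (j : H × H) → Coalgebra.Repr k (r.left j) (H × H) := fun j => Coalgebra.Repr.arbitrary k _
  set c : (j : H × H) → Coalgebra.Repr k (r.right j) (H × H) := fun j => Coalgebra.Repr.arbitrary k _
  have h1 : Vmap γ (e ⊗ₜ h) = ∑ j ∈ r.index, ∑ s ∈ (c j).index,
      (e * γ (𝒮 ((c j).right s))) ⊗ₜ[k] (r.left j * 𝒮 ((c j).left s)) := by
    rw [Vmap]
    simp only [LinearMap.comp_apply, LinearMap.lTensor_tmul, LinearEquiv.coe_coe]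
    rw [show Δ h = ∑ j ∈ r.index, r.left j ⊗ₜ[k] r.right j from r.eq.symm,
      TensorProduct.tmul_sum, map_sum, map_sum, map_sum]
    refine Finset.sum_congr rfl fun j _ => ?_
    rw [TensorProduct.assoc_symm_tmul, LinearMap.lTensor_tmul, LinearMap.comp_apply,
      show Δ (r.right j) = ∑ s ∈ (c j).index, (c j).left s ⊗ₜ[k] (c j).right s
        from (c j).eq.symm, map_sum, TensorProduct.tmul_sum, map_sum]
    refine Finset.sum_congr rfl fun s _ => ?_
    simp [Algebra.TensorProduct.tmul_mul_tmul]
  have h3 := Coalgebra.sum_tmul_tmul_eq r d c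
  have happ := congrArg (mulMap3
      (TensorProduct.mk k E H (1 : E))
      ((TensorProduct.mk k E H (1 : E)) ∘ₗ 𝒮)
      (((TensorProduct.mk k E H).flip (1 : H)) ∘ₗ
        (LinearMap.mulLeft k e) ∘ₗ γ.toLinearMap ∘ₗ 𝒮)) h3
  simp only [map_sum, mulMap3_tmul, LinearMap.comp_apply, LinearMap.flip_apply,
    TensorProduct.mk_apply, LinearMap.mulLeft_apply, AlgHom.toLinearMap_apply,
    Algebra.TensorProduct.tmul_mul_tmul, one_mul, mul_one] at happ
  rw [h1, ← happ]
  -- remaining: ∑ j ∑ s, (e * γ (𝒮 (r.right j))) ⊗ₜ (d.left s * 𝒮 (d.right s)) = (e * γ (𝒮 h)) ⊗ₜ 1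
  have hL : ∀ j ∈ r.index,
      ∑ s ∈ (d j).index, (e * γ (𝒮 (r.right j))) ⊗ₜ[k] ((d j).left s * 𝒮 ((d j).right s))
        = ε (r.left j) • ((e * γ (𝒮 (r.right j))) ⊗ₜ[k] (1 : H)) := by
    intro j _
    rw [← TensorProduct.tmul_sum, HopfAlgebra.sum_mul_antipode_eq_smul (d j),
      TensorProduct.tmul_smul]
  rw [Finset.sum_congr rfl hL]
  have : ∀ j ∈ r.index, ε (r.left j) • ((e * γ (𝒮 (r.right j))) ⊗ₜ[k] (1 : H))
      = (e * γ (𝒮 (ε (r.left j) • r.right j))) ⊗ₜ[k] (1 : H) := by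
    intro j _
    rw [map_smul, map_smul, mul_smul_comm, TensorProduct.smul_tmul']
  rw [Finset.sum_congr rfl this, ← TensorProduct.sum_tmul]
  congr 2
  · rw [← Finset.mul_sum, ← map_sum γ, ← map_sum 𝒮, sum_counit_smul r]

end MainAux
section Aux2


variable {k H E : Type*} [Field k] [Ring H] [HopfAlgebra k H] [Ring E] [Algebra k E]

local notation "Δ" => Coalgebra.comul (R := k) (A := H)
local notation "ε" => Coalgebra.counit (R := k) (A := H)
local notation "𝒮" => HopfAlgebra.antipode (R := k) (A := H)

noncomputable def Zmap (ρ : E →ₐ[k] E ⊗[k] H) (γ : H →ₐ[k] E) : E ⊗[k] H →ₗ[k] E ⊗[k] H :=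
  LinearMap.mul' k (E ⊗[k] H) ∘ₗ
    LinearMap.lTensor (E ⊗[k] H) (Wmap γ ∘ₗ Δ) ∘ₗ
    LinearMap.rTensor H ρ.toLinearMap

lemma rho_beta (ρ : E →ₐ[k] E ⊗[k] H) (γ : H →ₐ[k] E)
    (hγ : ∀ h : H, ρ (γ h) =
      TensorProduct.map γ.toLinearMap LinearMap.id (Coalgebra.comul (R := k) h))
    (t : E ⊗[k] H) : ρ (betaMap γ t) = Zmap ρ γ t := by
  induction t using TensorProduct.induction_on with
  | zero => simp [Zmap]
  | tmul e h =>
    rw [betaMap_tmul, map_mul, rho_gammaS ρ γ hγ h, Zmap]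
    simp
  | add a b ha hb => simp [map_add, ha, hb]

lemma coassoc_symm_form (ρ : E →ₐ[k] E ⊗[k] H)
    (hcoassoc : ∀ x : E, (TensorProduct.assoc k E H H)
        (LinearMap.rTensor H ρ.toLinearMap (ρ x)) =
      LinearMap.lTensor E (Coalgebra.comul (R := k)) (ρ x)) (x : E) :
    LinearMap.rTensor H ρ.toLinearMap (ρ x) =
      (TensorProduct.assoc k E H H).symm
        (LinearMap.lTensor E (Coalgebra.comul (R := k)) (ρ x)) := by
  rw [← hcoassoc x, LinearEquiv.symm_apply_apply]

lemma Vmap_eq_beta (γ : H →ₐ[k] E) (t : E ⊗[k] H) :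
    Vmap γ t = betaMap γ t ⊗ₜ[k] (1 : H) := by
  induction t using TensorProduct.induction_on with
  | zero => simp
  | tmul e h => rw [Vmap_tmul, betaMap_tmul]
  | add a b ha hb => rw [map_add, ha, hb, map_add, add_tmul]

lemma rho_deltaMap (ρ : E →ₐ[k] E ⊗[k] H) (γ : H →ₐ[k] E)
    (hγ : ∀ h : H, ρ (γ h) =
      TensorProduct.map γ.toLinearMap LinearMap.id (Coalgebra.comul (R := k) h))
    (hcoassoc : ∀ x : E, (TensorProduct.assoc k E H H)
        (LinearMap.rTensor H ρ.toLinearMap (ρ x)) =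
      LinearMap.lTensor E (Coalgebra.comul (R := k)) (ρ x)) (x : E) :
    ρ (deltaMap ρ γ x) = deltaMap ρ γ x ⊗ₜ[k] (1 : H) := by
  have h0 : deltaMap ρ γ x = betaMap γ (ρ x) := rfl
  rw [h0, rho_beta ρ γ hγ, ← Vmap_eq_beta γ (ρ x)]
  rw [Zmap, Vmap]
  simp only [LinearMap.comp_apply, LinearEquiv.coe_coe, AlgHom.toLinearMap_apply]
  rw [coassoc_symm_form ρ hcoassoc x]

lemma deltaMap_mem (ρ : E →ₐ[k] E ⊗[k] H) (γ : H →ₐ[k] E)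
    (hγ : ∀ h : H, ρ (γ h) =
      TensorProduct.map γ.toLinearMap LinearMap.id (Coalgebra.comul (R := k) h))
    (hcoassoc : ∀ x : E, (TensorProduct.assoc k E H H)
        (LinearMap.rTensor H ρ.toLinearMap (ρ x)) =
      LinearMap.lTensor E (Coalgebra.comul (R := k)) (ρ x)) (x : E) :
    deltaMap ρ γ x ∈ Subalgebra.toSubmodule (coinv ρ) :=
  rho_deltaMap ρ γ hγ hcoassoc x

noncomputable def psiMap (ρ : E →ₐ[k] E ⊗[k] H) (γ : H →ₐ[k] E)
    (hmem : ∀ x : E, deltaMap ρ γ x ∈ Subalgebra.toSubmodule (coinv ρ)) :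
    E →ₗ[k] ↥(coinv ρ) ⊗[k] H :=
  TensorProduct.map
    (LinearMap.codRestrict (Subalgebra.toSubmodule (coinv ρ)) (deltaMap ρ γ) hmem)
    LinearMap.id ∘ₗ ρ.toLinearMap

lemma xi_tmul (ρ : E →ₐ[k] E ⊗[k] H) (γ : H →ₐ[k] E) (u : ↥(coinv ρ)) (h : H) :
    xiMap ρ γ (u ⊗ₜ h) = (u : E) * γ h := by
  simp [xiMap]

noncomputable def V2map (γ : H →ₐ[k] E) : E ⊗[k] H →ₗ[k] E :=
  LinearMap.mul' k E ∘ₗ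
    TensorProduct.map (betaMap γ) γ.toLinearMap ∘ₗ
    (TensorProduct.assoc k E H H).symm.toLinearMap ∘ₗ
    LinearMap.lTensor E Δ

set_option synthInstance.maxHeartbeats 1000000 in
lemma V2map_tmul (γ : H →ₐ[k] E) (e : E) (h : H) :
    V2map γ (e ⊗ₜ h) = ε h • e := by
  classical
  set r : Coalgebra.Repr k h (H × H) := Coalgebra.Repr.arbitrary k h
  rw [V2map]
  simp only [LinearMap.comp_apply, LinearMap.lTensor_tmul, LinearEquiv.coe_coe]
  rw [show Δ h = ∑ j ∈ r.index, r.left j ⊗ₜ[k] r.right j from r.eq.symm,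
    TensorProduct.tmul_sum, map_sum, map_sum, map_sum]
  have : ∀ j ∈ r.index,
      (LinearMap.mul' k E) ((TensorProduct.map (betaMap γ) γ.toLinearMap)
        ((TensorProduct.assoc k E H H).symm (e ⊗ₜ[k] (r.left j ⊗ₜ[k] r.right j))))
      = e * γ (𝒮 (r.left j) * r.right j) := by
    intro j _
    rw [TensorProduct.assoc_symm_tmul]
    simp [mul_assoc]
  rw [Finset.sum_congr rfl this, ← Finset.mul_sum, ← map_sum γ,
    HopfAlgebra.sum_antipode_mul_eq_smul r, map_smul, map_one, mul_smul_comm, mul_one]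

set_option synthInstance.maxHeartbeats 1000000 in
lemma xi_psi (ρ : E →ₐ[k] E ⊗[k] H) (γ : H →ₐ[k] E)
    (hγ : ∀ h : H, ρ (γ h) =
      TensorProduct.map γ.toLinearMap LinearMap.id (Coalgebra.comul (R := k) h))
    (hcoassoc : ∀ x : E, (TensorProduct.assoc k E H H)
        (LinearMap.rTensor H ρ.toLinearMap (ρ x)) =
      LinearMap.lTensor E (Coalgebra.comul (R := k)) (ρ x))
    (hcounit : ∀ x : E,
      (TensorProduct.rid k E) (LinearMap.lTensor E (Coalgebra.counit (R := k)) (ρ x)) = x)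
    (hmem : ∀ x : E, deltaMap ρ γ x ∈ Subalgebra.toSubmodule (coinv ρ))
    (x : E) : xiMap ρ γ (psiMap ρ γ hmem x) = x := by
  have hstep : ∀ t : E ⊗[k] H,
      xiMap ρ γ ((TensorProduct.map
        (LinearMap.codRestrict (Subalgebra.toSubmodule (coinv ρ)) (deltaMap ρ γ) hmem)
        LinearMap.id) t)
      = (LinearMap.mul' k E) ((TensorProduct.map (betaMap γ) γ.toLinearMap)
          (LinearMap.rTensor H ρ.toLinearMap t)) := by
    intro t
    induction t using TensorProduct.induction_on with
    | zero => simp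
    | tmul e h =>
      rw [TensorProduct.map_tmul, LinearMap.rTensor_tmul, TensorProduct.map_tmul]
      rw [xi_tmul]
      simp [deltaMap]
    | add a b ha hb => simp [map_add, ha, hb]
  have h1 : psiMap ρ γ hmem x = (TensorProduct.map
      (LinearMap.codRestrict (Subalgebra.toSubmodule (coinv ρ)) (deltaMap ρ γ) hmem)
      LinearMap.id) (ρ x) := rfl
  rw [h1, hstep (ρ x), coassoc_symm_form ρ hcoassoc x]
  have h2 : (LinearMap.mul' k E) ((TensorProduct.map (betaMap γ) γ.toLinearMap)
      ((TensorProduct.assoc k E H H).symm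
        (LinearMap.lTensor E (Coalgebra.comul (R := k)) (ρ x))))
      = V2map γ (ρ x) := by
    rw [V2map]
    simp only [LinearMap.comp_apply, LinearEquiv.coe_coe]
  rw [h2]
  have h3 : ∀ t : E ⊗[k] H, V2map γ t
      = TensorProduct.rid k E (LinearMap.lTensor E (Coalgebra.counit (R := k)) t) := by
    intro t
    induction t using TensorProduct.induction_on with
    | zero => simp
    | tmul e h => rw [V2map_tmul, LinearMap.lTensor_tmul, TensorProduct.rid_tmul]
    | add a b ha hb => simp [map_add, ha, hb]
  rw [h3, hcounit x]

lemma delta_u_gamma (ρ : E →ₐ[k] E ⊗[k] H) (γ : H →ₐ[k] E)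
    (hγ : ∀ h : H, ρ (γ h) =
      TensorProduct.map γ.toLinearMap LinearMap.id (Coalgebra.comul (R := k) h))
    {u : E} (hu : u ∈ coinv ρ) (a : H) :
    deltaMap ρ γ (u * γ a) = ε a • u := by
  classical
  set r : Coalgebra.Repr k a (H × H) := Coalgebra.Repr.arbitrary k a
  have h0 : deltaMap ρ γ (u * γ a) = betaMap γ (ρ (u * γ a)) := rfl
  rw [h0, map_mul, mem_coinv hu, hγ a,
    show (Coalgebra.comul (R := k) a) = ∑ j ∈ r.index, r.left j ⊗ₜ[k] r.right j
      from r.eq.symm, map_sum, Finset.mul_sum, map_sum]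
  have : ∀ j ∈ r.index,
      betaMap γ ((u ⊗ₜ[k] (1:H)) * (TensorProduct.map γ.toLinearMap LinearMap.id
        (r.left j ⊗ₜ[k] r.right j)))
      = u * (γ (r.left j * 𝒮 (r.right j))) := by
    intro j _
    simp [Algebra.TensorProduct.tmul_mul_tmul, mul_assoc]
  rw [Finset.sum_congr rfl this, ← Finset.mul_sum, ← map_sum γ,
    HopfAlgebra.sum_mul_antipode_eq_smul r, map_smul, map_one, mul_smul_comm, mul_one]

set_option synthInstance.maxHeartbeats 1000000 in
lemma psi_xi (ρ : E →ₐ[k] E ⊗[k] H) (γ : H →ₐ[k] E)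
    (hγ : ∀ h : H, ρ (γ h) =
      TensorProduct.map γ.toLinearMap LinearMap.id (Coalgebra.comul (R := k) h))
    (hmem : ∀ x : E, deltaMap ρ γ x ∈ Subalgebra.toSubmodule (coinv ρ))
    (u : ↥(coinv ρ)) (h : H) :
    psiMap ρ γ hmem (xiMap ρ γ (u ⊗ₜ h)) = u ⊗ₜ h := by
  classical
  set r : Coalgebra.Repr k h (H × H) := Coalgebra.Repr.arbitrary k h
  rw [xi_tmul]
  have h1 : psiMap ρ γ hmem ((u : E) * γ h) = (TensorProduct.map
      (LinearMap.codRestrict (Subalgebra.toSubmodule (coinv ρ)) (deltaMap ρ γ) hmem)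
      LinearMap.id) (ρ ((u : E) * γ h)) := rfl
  rw [h1, map_mul, mem_coinv u.2, hγ h,
    show (Coalgebra.comul (R := k) h) = ∑ j ∈ r.index, r.left j ⊗ₜ[k] r.right j
      from r.eq.symm, map_sum, Finset.mul_sum, map_sum]
  have : ∀ j ∈ r.index,
      (TensorProduct.map
        (LinearMap.codRestrict (Subalgebra.toSubmodule (coinv ρ)) (deltaMap ρ γ) hmem)
        LinearMap.id) (((u : E) ⊗ₜ[k] (1:H)) * (TensorProduct.map γ.toLinearMap LinearMap.id
          (r.left j ⊗ₜ[k] r.right j)))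
      = u ⊗ₜ[k] (ε (r.left j) • r.right j) := by
    intro j _
    rw [TensorProduct.map_tmul, Algebra.TensorProduct.tmul_mul_tmul, TensorProduct.map_tmul]
    have hc : (LinearMap.codRestrict (Subalgebra.toSubmodule (coinv ρ)) (deltaMap ρ γ) hmem)
        ((u : E) * γ (r.left j)) = ε (r.left j) • u := by
      apply Subtype.ext
      rw [LinearMap.codRestrict_apply, delta_u_gamma ρ γ hγ u.2 (r.left j)]
      rfl
    simp only [LinearMap.id_coe, id_eq, AlgHom.toLinearMap_apply, one_mul]
    rw [hc, TensorProduct.smul_tmul]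
  rw [Finset.sum_congr rfl this, ← TensorProduct.tmul_sum, sum_counit_smul r]

lemma actL_repr (γ : H →ₐ[k] E) (v : E) {a : H} (c : Coalgebra.Repr k a (H × H)) :
    actL γ v a = ∑ s ∈ c.index, γ (c.left s) * v * γ (𝒮 (c.right s)) := by
  rw [actL]
  simp only [LinearMap.comp_apply]
  rw [show (Coalgebra.comul (R := k) a) = ∑ s ∈ c.index, c.left s ⊗ₜ[k] c.right s
    from c.eq.symm, map_sum, map_sum]
  refine Finset.sum_congr rfl fun s _ => ?_
  simp

lemma act_collapse (γ : H →ₐ[k] E) (v : E) {h : H} (r : Coalgebra.Repr k h (H × H)) :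
    ∑ j ∈ r.index, actL γ v (r.left j) * γ (r.right j) = γ h * v := by
  classical
  set p : (j : H × H) → Coalgebra.Repr k (r.left j) (H × H) := fun j => Coalgebra.Repr.arbitrary k _
  set q : (j : H × H) → Coalgebra.Repr k (r.right j) (H × H) := fun j => Coalgebra.Repr.arbitrary k _
  have h3 := Coalgebra.sum_tmul_tmul_eq r p q
  have happ := congrArg (mulMap3
      ((LinearMap.mulRight k v) ∘ₗ γ.toLinearMap)
      (γ.toLinearMap ∘ₗ 𝒮) γ.toLinearMap) h3
  simp only [map_sum, mulMap3_tmul, LinearMap.comp_apply, LinearMap.mulRight_apply,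
    AlgHom.toLinearMap_apply] at happ
  have hL : ∀ j ∈ r.index, actL γ v (r.left j) * γ (r.right j)
      = ∑ s ∈ (p j).index,
          (γ ((p j).left s) * v) * (γ (𝒮 ((p j).right s)) * γ (r.right j)) := by
    intro j _
    rw [actL_repr γ v (p j), Finset.sum_mul]
    exact Finset.sum_congr rfl fun s _ => by rw [mul_assoc, mul_assoc]
  rw [Finset.sum_congr rfl hL, happ]
  have hR : ∀ j ∈ r.index,
      ∑ s ∈ (q j).index,
          (γ (r.left j) * v) * (γ (𝒮 ((q j).left s)) * γ ((q j).right s))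
      = ε (r.right j) • (γ (r.left j) * v) := by
    intro j _
    have : ∀ s ∈ (q j).index,
        (γ (r.left j) * v) * (γ (𝒮 ((q j).left s)) * γ ((q j).right s))
        = (γ (r.left j) * v) * γ (𝒮 ((q j).left s) * (q j).right s) := by
      intro s _
      rw [map_mul]
    rw [Finset.sum_congr rfl this, ← Finset.mul_sum, ← map_sum γ,
      HopfAlgebra.sum_antipode_mul_eq_smul (q j), map_smul, map_one, mul_smul_comm, mul_one]
  rw [Finset.sum_congr rfl hR]
  have : ∀ j ∈ r.index, ε (r.right j) • (γ (r.left j) * v)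
      = (γ (ε (r.right j) • r.left j)) * v := by
    intro j _
    rw [map_smul, smul_mul_assoc]
  rw [Finset.sum_congr rfl this, ← Finset.sum_mul, ← map_sum γ, sum_smul_counit r]


end Aux2

end Stmt6Aux

set_option synthInstance.maxHeartbeats 1000000 in
set_option maxHeartbeats 1000000 in
/-- Let `E` be a right `H`-comodule algebra, `U = E^{coH}`, and `γ : H → E` a
convolution-invertible `H`-comodule algebra map (trivializing section).  Then
`ξ : U # H → E`, `ξ(u#h) = u γ(h)`, is an isomorphism of left `U`-modules and right
`H`-comodule algebras, where the action used to form `U # H` is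
`h ▷ u = Σ γ(h₍₁₎) u γ(S h₍₂₎)`. -/
theorem stmt6 {k H E : Type*} [Field k] [Ring H] [HopfAlgebra k H] [Ring E] [Algebra k E]
    (ρ : E →ₐ[k] E ⊗[k] H)
    (hcoassoc : ∀ x : E, (TensorProduct.assoc k E H H)
        (LinearMap.rTensor H ρ.toLinearMap (ρ x)) =
      LinearMap.lTensor E (Coalgebra.comul (R := k)) (ρ x))
    (hcounit : ∀ x : E,
      (TensorProduct.rid k E) (LinearMap.lTensor E (Coalgebra.counit (R := k)) (ρ x)) = x)
    (γ : H →ₐ[k] E)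
    (hγ : ∀ h : H, ρ (γ h) =
      TensorProduct.map γ.toLinearMap LinearMap.id (Coalgebra.comul (R := k) h))
    -- the action `h ▷ u = Σ γ(h₍₁₎) u γ(S h₍₂₎)` preserves the coinvariants …
    (hact : ∀ (v : coinv ρ) (h : H), actL γ (v : E) h ∈ coinv ρ)
    -- … and `smul` is the corresponding smash product multiplication on `U # H`
    (smul : ((coinv ρ) ⊗[k] H) →ₗ[k] ((coinv ρ) ⊗[k] H) →ₗ[k] ((coinv ρ) ⊗[k] H))
    (hsmul : ∀ (u v : coinv ρ) (h g : H), smul (u ⊗ₜ h) (v ⊗ₜ g) =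
      TensorProduct.map
        ((LinearMap.mulLeft k u) ∘ₗ
          LinearMap.codRestrict (Subalgebra.toSubmodule (coinv ρ)) (actL γ (v : E))
            (fun h' => hact v h'))
        (LinearMap.mulRight k g) (Coalgebra.comul (R := k) h)) :
    -- ξ(u # h) = u γ(h)
    (∀ (u : coinv ρ) (h : H), xiMap ρ γ (u ⊗ₜ h) = (u : E) * γ h) ∧
    -- ξ is bijective
    Function.Bijective (xiMap ρ γ) ∧
    -- ξ is an algebra map
    (∀ x y : (coinv ρ) ⊗[k] H, xiMap ρ γ (smul x y) = xiMap ρ γ x * xiMap ρ γ y) ∧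
    (xiMap ρ γ ((1 : coinv ρ) ⊗ₜ (1 : H)) = 1) ∧
    -- ξ is a map of left U-modules
    (∀ (u' u : coinv ρ) (h : H),
      xiMap ρ γ ((u' * u) ⊗ₜ h) = (u' : E) * xiMap ρ γ (u ⊗ₜ h)) ∧
    -- ξ is a map of right H-comodules
    (∀ x : (coinv ρ) ⊗[k] H,
      ρ (xiMap ρ γ x) =
        TensorProduct.map (xiMap ρ γ) LinearMap.id (smashCoact k (coinv ρ) H x)) := by
  classical
  have hmem : ∀ x : E, Stmt6Aux.deltaMap ρ γ x ∈ Subalgebra.toSubmodule (coinv ρ) :=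
    fun x => Stmt6Aux.deltaMap_mem ρ γ hγ hcoassoc x
  refine ⟨fun u h => Stmt6Aux.xi_tmul ρ γ u h, ?_, ?_, ?_, ?_, ?_⟩
  · -- bijectivity
    have hpx : (Stmt6Aux.psiMap ρ γ hmem) ∘ₗ (xiMap ρ γ) = LinearMap.id := by
      apply TensorProduct.ext'
      intro u h
      simpa using Stmt6Aux.psi_xi ρ γ hγ hmem u h
    have hlinv : Function.LeftInverse (Stmt6Aux.psiMap ρ γ hmem) (xiMap ρ γ) := fun t => by
      simpa using LinearMap.congr_fun hpx t
    exact ⟨hlinv.injective, fun x =>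
      ⟨Stmt6Aux.psiMap ρ γ hmem x, Stmt6Aux.xi_psi ρ γ hγ hcoassoc hcounit hmem x⟩⟩
  · -- multiplicativity
    intro x y
    induction x using TensorProduct.induction_on with
    | zero => simp
    | add a b ha hb => simp only [map_add, LinearMap.add_apply, ha, hb, add_mul]
    | tmul u h =>
      induction y using TensorProduct.induction_on with
      | zero => simp
      | add a b ha hb => simp only [map_add, ha, hb, mul_add]
      | tmul v g =>
        rw [hsmul u v h g]
        have r : Coalgebra.Repr k h (H × H) := Coalgebra.Repr.arbitrary k h
        rw [show (Coalgebra.comul (R := k) h)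
            = ∑ j ∈ r.index, r.left j ⊗ₜ[k] r.right j from r.eq.symm, map_sum, map_sum]
        have hterm : ∀ j ∈ r.index,
            xiMap ρ γ ((TensorProduct.map
              ((LinearMap.mulLeft k u) ∘ₗ
                LinearMap.codRestrict (Subalgebra.toSubmodule (coinv ρ))
                  (actL γ (v : E)) (fun h' => hact v h'))
              (LinearMap.mulRight k g)) (r.left j ⊗ₜ[k] r.right j))
            = (u : E) * ((actL γ (v : E) (r.left j) * γ (r.right j)) * γ g) := by
          intro j _
          rw [TensorProduct.map_tmul, LinearMap.comp_apply, LinearMap.mulLeft_apply,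
            LinearMap.mulRight_apply, Stmt6Aux.xi_tmul, map_mul]
          simp only [MulMemClass.coe_mul, LinearMap.codRestrict_apply, mul_assoc]
          rfl
        rw [Finset.sum_congr rfl hterm, ← Finset.mul_sum, ← Finset.sum_mul,
          Stmt6Aux.act_collapse γ (v : E) r, Stmt6Aux.xi_tmul, Stmt6Aux.xi_tmul]
        simp only [mul_assoc]
  · -- unit
    rw [Stmt6Aux.xi_tmul, OneMemClass.coe_one, map_one, one_mul]
  · -- left U-linearity
    intro u' u h
    rw [Stmt6Aux.xi_tmul, Stmt6Aux.xi_tmul, MulMemClass.coe_mul, mul_assoc]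
  · -- comodule map
    intro x
    induction x using TensorProduct.induction_on with
    | zero => simp
    | add a b ha hb => simp only [map_add, ha, hb]
    | tmul u h =>
      rw [Stmt6Aux.xi_tmul, map_mul, Stmt6Aux.mem_coinv u.2, hγ h, smashCoact]
      have r : Coalgebra.Repr k h (H × H) := Coalgebra.Repr.arbitrary k h
      rw [show (Coalgebra.comul (R := k) h)
          = ∑ j ∈ r.index, r.left j ⊗ₜ[k] r.right j from r.eq.symm]
      rw [map_sum, Finset.mul_sum]
      simp only [LinearMap.comp_apply, LinearMap.lTensor_tmul, LinearEquiv.coe_coe]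
      rw [show (Coalgebra.comul (R := k) h)
          = ∑ j ∈ r.index, r.left j ⊗ₜ[k] r.right j from r.eq.symm]
      rw [TensorProduct.tmul_sum, map_sum, map_sum]
      refine Finset.sum_congr rfl fun j _ => ?_
      rw [TensorProduct.assoc_symm_tmul]
      simp [Stmt6Aux.xi_tmul, Algebra.TensorProduct.tmul_mul_tmul]
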